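/- (Davies) Let b be a graph over (X, deg), i.e. the measure is the normalizing measure m = deg, so that Deg ≡ 1 and the Laplacian Δ is a bounded self-adjoint operator on ℓ²(X, deg). Then the heat kernel satisfies p_t(x,y) ≤ (1/√(deg(x)·deg(y))) · exp(−t·ζ(d(x,y)/t)) for all x, y ∈ X and t > 0, where d is the combinatorial graph distance (the minimal number of edges in a path joining x and y). -/

import Mathlib

open MeasureTheory

noncomputable section

/-- `ζ(x) = x·arsinh(x) + 1 − √(x² + 1)`. -/
def zeta (x : ℝ) : ℝ := x * Real.arsinh x + 1 - Real.sqrt (x ^ 2 + 1)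

/-- The (weighted) degree `deg(x) = Σ_y b(x,y)` of a vertex. -/
def graphDeg {X : Type*} (b : X → X → ℝ) (x : X) : ℝ := ∑' y, b x y

/-- The measure on `X` determined by a vertex weight `m`, i.e. `μ(A) = Σ_{x ∈ A} m(x)`. -/
def graphMeasure {X : Type*} [MeasurableSpace X] (m : X → ℝ) : Measure X :=
  Measure.sum (fun x => ENNReal.ofReal (m x) • Measure.dirac x)

lemma graphMeasure_singleton {X : Type*} [MeasurableSpace X] [MeasurableSingletonClass X]
    (m : X → ℝ) (x : X) : graphMeasure m {x} = ENNReal.ofReal (m x) := by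
  rw [graphMeasure, Measure.sum_apply _ (measurableSet_singleton x)]
  rw [tsum_eq_single x]
  · simp
  · intro z hz
    have : z ∉ ({x} : Set X) := by simpa using hz
    simp [Measure.dirac_apply' _ (measurableSet_singleton x), Set.indicator_of_notMem this]

lemma graphMeasure_singleton_ne_top {X : Type*} [MeasurableSpace X]
    [MeasurableSingletonClass X] (m : X → ℝ) (x : X) : graphMeasure m {x} ≠ ⊤ := by
  rw [graphMeasure_singleton]; exact ENNReal.ofReal_ne_top

/-- `δ_x`, the indicator of the vertex `x`, as an element of `ℓ²(X,m) = L²(graphMeasure m)`. -/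
def deltaVert {X : Type*} [MeasurableSpace X] [MeasurableSingletonClass X]
    (m : X → ℝ) (x : X) : Lp ℝ 2 (graphMeasure m) :=
  indicatorConstLp 2 (measurableSet_singleton x) (graphMeasure_singleton_ne_top m x) (1 : ℝ)

/-- The combinatorial graph distance: the minimal number of edges in a path joining `x` and
`y`. -/
def combDist {X : Type*} (b : X → X → ℝ) (x y : X) : ℕ :=
  sInf {n | ∃ f : ℕ → X, f 0 = x ∧ f n = y ∧ ∀ i < n, 0 < b (f i) (f (i + 1))}


open ENNReal

set_option maxHeartbeats 1000000
set_option synthInstance.maxHeartbeats 1000000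

namespace Davies
set_option linter.unusedSectionVars false
variable {X : Type*} [Countable X] [MeasurableSpace X] [MeasurableSingletonClass X]
variable {m : X → ℝ}

lemma gm_null (hm : ∀ x, 0 < m x) {s : Set X} (h : graphMeasure m s = 0) : s = ∅ := by
  by_contra hne
  obtain ⟨x, hx⟩ := Set.nonempty_iff_ne_empty.2 hne
  have h1 : graphMeasure m {x} ≤ graphMeasure m s := measure_mono (by simpa using hx)
  rw [graphMeasure_singleton, h, nonpos_iff_eq_zero, ENNReal.ofReal_eq_zero] at h1
  linarith [hm x]

lemma ae_eq_eq (hm : ∀ x, 0 < m x) {f g : X → ℝ} (h : f =ᵐ[graphMeasure m] g) : f = g := by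
  funext x
  have h0 : graphMeasure m {a | ¬ f a = g a} = 0 := ae_iff.1 h
  have he := gm_null hm h0
  by_contra hx
  exact (Set.eq_empty_iff_forall_notMem.1 he x) hx

lemma Lp_ext (hm : ∀ x, 0 < m x) {f g : Lp ℝ 2 (graphMeasure m)}
    (h : ∀ x, (f : X → ℝ) x = g x) : f = g :=
  MeasureTheory.Lp.ext <| by rw [show ((f : X → ℝ)) = g from funext h]

lemma gm_lintegral (m : X → ℝ) (φ : X → ℝ≥0∞) :
    ∫⁻ x, φ x ∂(graphMeasure m) = ∑' x, ENNReal.ofReal (m x) * φ x := by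
  rw [graphMeasure, lintegral_sum_measure]
  refine tsum_congr fun x => ?_
  rw [lintegral_smul_measure, lintegral_dirac' _ (measurable_of_countable φ), smul_eq_mul]

lemma tsum_ofReal_ne_top_iff {f : X → ℝ} (hf : ∀ x, 0 ≤ f x) :
    (∑' x, ENNReal.ofReal (f x)) ≠ ⊤ ↔ Summable f := by
  rw [tsum_congr (fun x => ENNReal.ofReal_eq_coe_nnreal (hf x)),
    ENNReal.tsum_coe_ne_top_iff_summable, ← NNReal.summable_coe]
  exact Iff.rfl

lemma integrable_iff (hm : ∀ x, 0 ≤ m x) (φ : X → ℝ) :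
    Integrable φ (graphMeasure m) ↔ Summable fun x => m x * |φ x| := by
  have h1 : Integrable φ (graphMeasure m) ↔ HasFiniteIntegral φ (graphMeasure m) :=
    ⟨fun h => h.2, fun h => ⟨(measurable_of_countable φ).aestronglyMeasurable, h⟩⟩
  rw [h1, hasFiniteIntegral_iff_norm, gm_lintegral, lt_top_iff_ne_top,
    tsum_congr (fun x => by rw [← ENNReal.ofReal_mul (hm x), Real.norm_eq_abs]),
    tsum_ofReal_ne_top_iff (fun x => mul_nonneg (hm x) (abs_nonneg _))]

lemma integral_eq (hm : ∀ x, 0 ≤ m x) {φ : X → ℝ} (h : Integrable φ (graphMeasure m)) :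
    ∫ x, φ x ∂(graphMeasure m) = ∑' x, m x * φ x := by
  rw [integral_countable' h]
  refine tsum_congr fun x => ?_
  rw [measureReal_def, graphMeasure_singleton, ENNReal.toReal_ofReal (hm x), smul_eq_mul]

lemma memL2_iff (hm : ∀ x, 0 ≤ m x) (φ : X → ℝ) :
    MemLp φ 2 (graphMeasure m) ↔ Summable fun x => m x * φ x ^ 2 := by
  rw [memLp_two_iff_integrable_sq (measurable_of_countable φ).aestronglyMeasurable,
    integrable_iff hm]
  simp only [abs_pow, sq_abs]

lemma coeFn_toLp (hm : ∀ x, 0 < m x) {φ : X → ℝ} (h : MemLp φ 2 (graphMeasure m)) :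
    ((h.toLp φ : Lp ℝ 2 (graphMeasure m)) : X → ℝ) = φ := ae_eq_eq hm h.coeFn_toLp

lemma integrable_mul (hm : ∀ x, 0 ≤ m x) (f g : Lp ℝ 2 (graphMeasure m)) :
    Integrable (fun x => (f : X → ℝ) x * g x) (graphMeasure m) := by
  have := L2.integrable_inner (𝕜 := ℝ) g f
  simpa [RCLike.inner_apply, starRingEnd_apply] using this

lemma inner_eq (hm : ∀ x, 0 ≤ m x) (f g : Lp ℝ 2 (graphMeasure m)) :
    (inner ℝ f g : ℝ) = ∑' x, m x * ((f : X → ℝ) x * g x) := by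
  rw [L2.inner_def, ← integral_eq hm (integrable_mul hm f g)]
  simp [RCLike.inner_apply, starRingEnd_apply, mul_comm]

lemma summable_mul (hm : ∀ x, 0 ≤ m x) (f g : Lp ℝ 2 (graphMeasure m)) :
    Summable fun x => m x * ((f : X → ℝ) x * g x) := by
  have := (integrable_iff hm _).1 (integrable_mul hm f g)
  refine Summable.of_abs ?_
  refine this.congr fun x => ?_
  simp [abs_mul, abs_of_nonneg (hm x)]


lemma norm_sq_eq (hm : ∀ x, 0 ≤ m x) (f : Lp ℝ 2 (graphMeasure m)) :
    ‖f‖ ^ 2 = ∑' x, m x * ((f : X → ℝ) x) ^ 2 := by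
  rw [← real_inner_self_eq_norm_sq, inner_eq hm]
  exact tsum_congr fun x => by ring

lemma delta_apply (hm : ∀ x, 0 < m x) (x z : X) :
    (deltaVert m x : X → ℝ) z = Set.indicator {x} (fun _ => (1:ℝ)) z := by
  exact congrFun (ae_eq_eq hm (indicatorConstLp_coeFn (p := 2)
    (hs := measurableSet_singleton x) (hμs := graphMeasure_singleton_ne_top m x) (c := (1:ℝ)))) z

lemma delta_self (hm : ∀ x, 0 < m x) (x : X) : (deltaVert m x : X → ℝ) x = 1 := by
  rw [delta_apply hm]; simp

lemma delta_ne (hm : ∀ x, 0 < m x) {x z : X} (h : z ≠ x) : (deltaVert m x : X → ℝ) z = 0 := by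
  rw [delta_apply hm]; simp [Set.indicator, h]

lemma inner_delta (hm : ∀ x, 0 < m x) (x : X) (u : Lp ℝ 2 (graphMeasure m)) :
    (inner ℝ (deltaVert m x) u : ℝ) = m x * (u : X → ℝ) x := by
  rw [inner_eq (fun z => (hm z).le)]
  rw [tsum_eq_single x]
  · rw [delta_self hm, one_mul]
  · intro z hz
    rw [delta_ne hm hz, zero_mul, mul_zero]

lemma norm_delta (hm : ∀ x, 0 < m x) (x : X) :
    ‖deltaVert m x‖ = Real.sqrt (m x) := by
  rw [deltaVert, norm_indicatorConstLp two_ne_zero ENNReal.ofNat_ne_top]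
  rw [measureReal_def, graphMeasure_singleton]
  simp [ENNReal.toReal_ofReal (hm x).le, Real.sqrt_eq_rpow, ENNReal.toReal_ofNat]


section Graph
variable {b : X → X → ℝ}

lemma not_mem_sup {z w : X} (hlf : ∀ x, (Function.support (b x)).Finite)
    (hw : w ∉ (hlf z).toFinset) : b z w = 0 := by
  have := (hlf z).mem_toFinset.not.1 hw
  simpa [Function.mem_support] using this

lemma deg_eq_sum (hlf : ∀ x, (Function.support (b x)).Finite) (z : X) :
    graphDeg b z = ∑ w ∈ (hlf z).toFinset, b z w :=
  tsum_eq_sum (fun w hw => not_mem_sup hlf hw)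

lemma tsum_row (hlf : ∀ x, (Function.support (b x)).Finite) (f : X → ℝ) (z : X) :
    ∑' w, b z w * f w = ∑ w ∈ (hlf z).toFinset, b z w * f w :=
  tsum_eq_sum (fun w hw => by rw [not_mem_sup hlf hw, zero_mul])

/-- Exchange of a weighted double sum, with summability. -/
lemma rowsum_tsum (hb_nonneg : ∀ x y, 0 ≤ b x y) (hb_symm : ∀ x y, b x y = b y x)
    (hlf : ∀ x, (Function.support (b x)).Finite)
    (g : X → ℝ) (hg : ∀ x, 0 ≤ g x)
    (hS : Summable fun w => graphDeg b w * g w) :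
    (Summable fun z => ∑ w ∈ (hlf z).toFinset, b z w * g w) ∧
    ∑' z, ∑ w ∈ (hlf z).toFinset, b z w * g w = ∑' w, graphDeg b w * g w := by
  have hrow_nonneg : ∀ z, 0 ≤ ∑ w ∈ (hlf z).toFinset, b z w * g w := fun z =>
    Finset.sum_nonneg fun w _ => mul_nonneg (hb_nonneg z w) (hg w)
  have hmg_nonneg : ∀ w, 0 ≤ graphDeg b w * g w := fun w =>
    mul_nonneg (by rw [deg_eq_sum hlf]; exact Finset.sum_nonneg fun i _ => hb_nonneg w i) (hg w)
  have E1 : ∀ z : X, (∑' w, ENNReal.ofReal (b z w * g w))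
      = ENNReal.ofReal (∑ w ∈ (hlf z).toFinset, b z w * g w) := by
    intro z
    rw [tsum_eq_sum (s := (hlf z).toFinset)
      (fun w hw => by rw [not_mem_sup hlf hw, zero_mul, ENNReal.ofReal_zero]),
      ENNReal.ofReal_sum_of_nonneg (fun w _ => mul_nonneg (hb_nonneg z w) (hg w))]
  have E2 : ∀ w : X, (∑' z, ENNReal.ofReal (b z w * g w))
      = ENNReal.ofReal (graphDeg b w * g w) := by
    intro w
    have hsymm : ∀ z, ENNReal.ofReal (b z w * g w) = ENNReal.ofReal (b w z * g w) := fun z => by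
      rw [hb_symm z w]
    rw [tsum_congr hsymm, tsum_eq_sum (s := (hlf w).toFinset)
      (fun z hz => by rw [not_mem_sup hlf hz, zero_mul, ENNReal.ofReal_zero]),
      ← ENNReal.ofReal_sum_of_nonneg (fun z _ => mul_nonneg (hb_nonneg w z) (hg w)),
      ← Finset.sum_mul, ← deg_eq_sum hlf]
  have E3 : (∑' z, ENNReal.ofReal (∑ w ∈ (hlf z).toFinset, b z w * g w))
      = ENNReal.ofReal (∑' w, graphDeg b w * g w) := by
    rw [tsum_congr (fun z => (E1 z).symm), ENNReal.tsum_comm, tsum_congr E2,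
      ← ENNReal.ofReal_tsum_of_nonneg hmg_nonneg hS]
  have hne : (∑' z, ENNReal.ofReal (∑ w ∈ (hlf z).toFinset, b z w * g w)) ≠ ⊤ := by
    rw [E3]; exact ENNReal.ofReal_ne_top
  have hsum := (tsum_ofReal_ne_top_iff hrow_nonneg).1 hne
  refine ⟨hsum, ?_⟩
  have h4 := (ENNReal.ofReal_tsum_of_nonneg hrow_nonneg hsum).trans E3
  exact (ENNReal.ofReal_eq_ofReal_iff (tsum_nonneg hrow_nonneg) (tsum_nonneg hmg_nonneg)).1 h4

/-- The function underlying a kernel operator. -/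
noncomputable def Tfun (hlf : ∀ x, (Function.support (b x)).Finite) (c : X → X → ℝ)
    (f : X → ℝ) (z : X) : ℝ :=
  (graphDeg b z)⁻¹ * ∑ w ∈ (hlf z).toFinset, c z w * f w

lemma schur_pt (hlf : ∀ x, (Function.support (b x)).Finite)
    (hdeg_pos : ∀ x, 0 < graphDeg b x)
    {C : ℝ} (hC : 0 ≤ C) {c : X → X → ℝ} (hc : ∀ z w, |c z w| ≤ C * b z w)
    (f : X → ℝ) (z : X) :
    graphDeg b z * (Tfun hlf c f z) ^ 2 ≤ C ^ 2 * ∑ w ∈ (hlf z).toFinset, b z w * f w ^ 2 := by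
  set s := (hlf z).toFinset
  set m := graphDeg b z with hmz
  have hm : 0 < m := hdeg_pos z
  have cs : (∑ w ∈ s, c z w * f w) ^ 2 ≤
      (∑ w ∈ s, |c z w|) * ∑ w ∈ s, |c z w| * f w ^ 2 := by
    have h1 : (∑ w ∈ s, c z w * f w) ^ 2 ≤ (∑ w ∈ s, |c z w * f w|) ^ 2 := by
      calc (∑ w ∈ s, c z w * f w) ^ 2 = |∑ w ∈ s, c z w * f w| ^ 2 := (sq_abs _).symm
        _ ≤ (∑ w ∈ s, |c z w * f w|) ^ 2 := by
            apply pow_le_pow_left₀ (abs_nonneg _) (Finset.abs_sum_le_sum_abs _ _)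
    refine h1.trans ?_
    have h2 : ∀ w ∈ s, |c z w * f w| = Real.sqrt (|c z w|) * (Real.sqrt (|c z w|) * |f w|) := by
      intro w _
      rw [← mul_assoc, Real.mul_self_sqrt (abs_nonneg _), abs_mul]
    rw [Finset.sum_congr rfl h2]
    refine (Finset.sum_mul_sq_le_sq_mul_sq s _ _).trans_eq ?_
    congr 1
    · exact Finset.sum_congr rfl fun w _ => Real.sq_sqrt (abs_nonneg _)
    · refine Finset.sum_congr rfl fun w _ => ?_
      rw [mul_pow, Real.sq_sqrt (abs_nonneg _), sq_abs]
  have hrow : ∑ w ∈ s, |c z w| ≤ C * m := by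
    rw [hmz, deg_eq_sum hlf, Finset.mul_sum]
    exact Finset.sum_le_sum fun w _ => hc z w
  have h3 : ∑ w ∈ s, |c z w| * f w ^ 2 ≤ C * ∑ w ∈ s, b z w * f w ^ 2 := by
    rw [Finset.mul_sum]
    refine Finset.sum_le_sum fun w _ => ?_
    rw [← mul_assoc]
    exact mul_le_mul_of_nonneg_right (hc z w) (sq_nonneg _)
  have key : (∑ w ∈ s, c z w * f w) ^ 2 ≤ (C * m) * (C * ∑ w ∈ s, b z w * f w ^ 2) := by
    refine cs.trans (mul_le_mul hrow h3 ?_ (by positivity))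
    exact Finset.sum_nonneg fun w _ => mul_nonneg (abs_nonneg _) (sq_nonneg _)
  have heq : m * (Tfun hlf c f z) ^ 2 = (m)⁻¹ * (∑ w ∈ s, c z w * f w) ^ 2 := by
    rw [Tfun, ← hmz]; field_simp; rfl
  rw [heq]
  calc (m)⁻¹ * (∑ w ∈ s, c z w * f w) ^ 2
      ≤ (m)⁻¹ * ((C * m) * (C * ∑ w ∈ s, b z w * f w ^ 2)) :=
        mul_le_mul_of_nonneg_left key (inv_nonneg.2 hm.le)
    _ = C ^ 2 * ∑ w ∈ s, b z w * f w ^ 2 := by field_simp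


lemma le_of_sq_le_sq {a c : ℝ} (ha : 0 ≤ a) (hc : 0 ≤ c) (h : a ^ 2 ≤ c ^ 2) : a ≤ c := by
  nlinarith

section Ops

lemma summable_fsq (hdeg_pos : ∀ x, 0 < graphDeg b x)
    (f : Lp ℝ 2 (graphMeasure (graphDeg b))) :
    Summable fun w => graphDeg b w * ((f : X → ℝ) w) ^ 2 :=
  (memL2_iff (fun x => (hdeg_pos x).le) _).1 (Lp.memLp f)

lemma memL2_Tfun (hb_nonneg : ∀ x y, 0 ≤ b x y) (hb_symm : ∀ x y, b x y = b y x)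
    (hlf : ∀ x, (Function.support (b x)).Finite) (hdeg_pos : ∀ x, 0 < graphDeg b x)
    {C : ℝ} (hC : 0 ≤ C) {c : X → X → ℝ} (hc : ∀ z w, |c z w| ≤ C * b z w)
    (f : Lp ℝ 2 (graphMeasure (graphDeg b))) :
    MemLp (Tfun hlf c (f : X → ℝ)) 2 (graphMeasure (graphDeg b)) := by
  rw [memL2_iff (fun x => (hdeg_pos x).le)]
  have hrow := rowsum_tsum hb_nonneg hb_symm hlf (fun w => ((f : X → ℝ) w) ^ 2)
    (fun w => sq_nonneg _) (summable_fsq hdeg_pos f)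
  refine Summable.of_nonneg_of_le
    (fun z => mul_nonneg (hdeg_pos z).le (sq_nonneg _))
    (fun z => schur_pt hlf hdeg_pos hC hc _ z) (hrow.1.mul_left _)

lemma Tfun_tsum_le (hb_nonneg : ∀ x y, 0 ≤ b x y) (hb_symm : ∀ x y, b x y = b y x)
    (hlf : ∀ x, (Function.support (b x)).Finite) (hdeg_pos : ∀ x, 0 < graphDeg b x)
    {C : ℝ} (hC : 0 ≤ C) {c : X → X → ℝ} (hc : ∀ z w, |c z w| ≤ C * b z w)
    (f : Lp ℝ 2 (graphMeasure (graphDeg b))) :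
    ∑' z, graphDeg b z * (Tfun hlf c (f : X → ℝ) z) ^ 2 ≤
      C ^ 2 * ∑' w, graphDeg b w * ((f : X → ℝ) w) ^ 2 := by
  have hrow := rowsum_tsum hb_nonneg hb_symm hlf (fun w => ((f : X → ℝ) w) ^ 2)
    (fun w => sq_nonneg _) (summable_fsq hdeg_pos f)
  have h1 : ∑' z, graphDeg b z * (Tfun hlf c (f : X → ℝ) z) ^ 2 ≤
      ∑' z, C ^ 2 * ∑ w ∈ (hlf z).toFinset, b z w * ((f : X → ℝ) w) ^ 2 := by
    refine Summable.tsum_le_tsum (fun z => schur_pt hlf hdeg_pos hC hc _ z) ?_ (hrow.1.mul_left _)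
    exact (memL2_iff (fun x => (hdeg_pos x).le) _).1 (memL2_Tfun hb_nonneg hb_symm hlf hdeg_pos hC hc f)
  rw [tsum_mul_left, hrow.2] at h1
  exact h1

lemma toLp_congr {φ ψ : X → ℝ} (h : MemLp φ 2 (graphMeasure (graphDeg b)))
    (h' : MemLp ψ 2 (graphMeasure (graphDeg b))) (e : φ = ψ) : h.toLp φ = h'.toLp ψ := by
  subst e; rfl

/-- The kernel operator `f ↦ (z ↦ deg(z)⁻¹ ∑_w c z w f w)` as a continuous linear map. -/
noncomputable def kernelOp (hb_nonneg : ∀ x y, 0 ≤ b x y) (hb_symm : ∀ x y, b x y = b y x)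
    (hlf : ∀ x, (Function.support (b x)).Finite) (hdeg_pos : ∀ x, 0 < graphDeg b x)
    {C : ℝ} (hC : 0 ≤ C) {c : X → X → ℝ}
    (hc : ∀ z w, |c z w| ≤ C * b z w) :
    Lp ℝ 2 (graphMeasure (graphDeg b)) →L[ℝ] Lp ℝ 2 (graphMeasure (graphDeg b)) := by
  have hd0 : ∀ x, (0:ℝ) ≤ graphDeg b x := fun x => (hdeg_pos x).le
  refine LinearMap.mkContinuous
    { toFun := fun f => (memL2_Tfun hb_nonneg hb_symm hlf hdeg_pos hC hc f).toLp _
      map_add' := ?_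
      map_smul' := ?_ } C ?_
  · intro f g
    refine (toLp_congr (memL2_Tfun hb_nonneg hb_symm hlf hdeg_pos hC hc (f + g))
      ((memL2_Tfun hb_nonneg hb_symm hlf hdeg_pos hC hc f).add
      (memL2_Tfun hb_nonneg hb_symm hlf hdeg_pos hC hc g)) ?_).trans
      (MemLp.toLp_add _ _)
    have hfg : ((f + g : Lp ℝ 2 (graphMeasure (graphDeg b))) : X → ℝ)
        = (f : X → ℝ) + (g : X → ℝ) := ae_eq_eq hdeg_pos (Lp.coeFn_add f g)
    funext z
    simp only [Tfun, hfg, Pi.add_apply, mul_add, Finset.sum_add_distrib]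
  · intro a f
    refine (toLp_congr (memL2_Tfun hb_nonneg hb_symm hlf hdeg_pos hC hc (a • f))
      ((memL2_Tfun hb_nonneg hb_symm hlf hdeg_pos hC hc f).const_smul a) ?_).trans
      (MemLp.toLp_const_smul a (memL2_Tfun hb_nonneg hb_symm hlf hdeg_pos hC hc f))
    have hfg : ((a • f : Lp ℝ 2 (graphMeasure (graphDeg b))) : X → ℝ)
        = a • (f : X → ℝ) := ae_eq_eq hdeg_pos (Lp.coeFn_smul a f)
    funext z
    have hs : ∑ w ∈ (hlf z).toFinset, c z w * (a * (f : X → ℝ) w)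
        = a * ∑ w ∈ (hlf z).toFinset, c z w * (f : X → ℝ) w := by
      rw [Finset.mul_sum]; exact Finset.sum_congr rfl fun w _ => by ring
    simp only [Tfun, hfg, Pi.smul_apply, smul_eq_mul, hs]
    ring
  · intro f
    simp only [LinearMap.coe_mk, AddHom.coe_mk]
    have hn := norm_sq_eq hd0 ((memL2_Tfun hb_nonneg hb_symm hlf hdeg_pos hC hc f).toLp _)
    rw [coeFn_toLp hdeg_pos] at hn
    refine le_of_sq_le_sq (norm_nonneg _) (mul_nonneg hC (norm_nonneg _)) ?_
    rw [hn, mul_pow]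
    exact (Tfun_tsum_le hb_nonneg hb_symm hlf hdeg_pos hC hc f).trans_eq
      (by rw [norm_sq_eq hd0 f])

lemma kernelOp_apply (hb_nonneg : ∀ x y, 0 ≤ b x y) (hb_symm : ∀ x y, b x y = b y x)
    (hlf : ∀ x, (Function.support (b x)).Finite) (hdeg_pos : ∀ x, 0 < graphDeg b x)
    {C : ℝ} (hC : 0 ≤ C) {c : X → X → ℝ}
    (hc : ∀ z w, |c z w| ≤ C * b z w) (f : Lp ℝ 2 (graphMeasure (graphDeg b))) :
    ((kernelOp hb_nonneg hb_symm hlf hdeg_pos hC hc f : Lp ℝ 2 (graphMeasure (graphDeg b))) : X → ℝ)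
      = Tfun hlf c (f : X → ℝ) := by
  rw [kernelOp]
  exact coeFn_toLp hdeg_pos (memL2_Tfun hb_nonneg hb_symm hlf hdeg_pos hC hc f)

lemma memL2_mul (hdeg_pos : ∀ x, 0 < graphDeg b x) {g : X → ℝ} (hg : ∀ z, |g z| ≤ 1)
    (f : Lp ℝ 2 (graphMeasure (graphDeg b))) :
    MemLp (fun z => g z * (f : X → ℝ) z) 2 (graphMeasure (graphDeg b)) := by
  refine MemLp.of_le (Lp.memLp f) (measurable_of_countable _).aestronglyMeasurable ?_
  refine Filter.Eventually.of_forall fun z => ?_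
  rw [Real.norm_eq_abs, Real.norm_eq_abs, abs_mul]
  exact mul_le_of_le_one_left (abs_nonneg _) (hg z)

/-- The multiplication operator by a function bounded by `1`. -/
noncomputable def mulOp (hdeg_pos : ∀ x, 0 < graphDeg b x) {g : X → ℝ} (hg : ∀ z, |g z| ≤ 1) :
    Lp ℝ 2 (graphMeasure (graphDeg b)) →L[ℝ] Lp ℝ 2 (graphMeasure (graphDeg b)) := by
  refine LinearMap.mkContinuous
    { toFun := fun f => (memL2_mul hdeg_pos hg f).toLp _
      map_add' := ?_
      map_smul' := ?_ } 1 ?_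
  · intro f g'
    refine (toLp_congr (memL2_mul hdeg_pos hg (f + g'))
      ((memL2_mul hdeg_pos hg f).add (memL2_mul hdeg_pos hg g')) ?_).trans
      (MemLp.toLp_add _ _)
    have hfg : ((f + g' : Lp ℝ 2 (graphMeasure (graphDeg b))) : X → ℝ)
        = (f : X → ℝ) + (g' : X → ℝ) := ae_eq_eq hdeg_pos (Lp.coeFn_add f g')
    funext z
    simp only [hfg, Pi.add_apply, mul_add]
  · intro a f
    refine (toLp_congr (memL2_mul hdeg_pos hg (a • f))
      ((memL2_mul hdeg_pos hg f).const_smul a) ?_).trans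
      (MemLp.toLp_const_smul a (memL2_mul hdeg_pos hg f))
    have hfg : ((a • f : Lp ℝ 2 (graphMeasure (graphDeg b))) : X → ℝ)
        = a • (f : X → ℝ) := ae_eq_eq hdeg_pos (Lp.coeFn_smul a f)
    funext z
    simp only [hfg, Pi.smul_apply, smul_eq_mul]
    ring
  · intro f
    simp only [LinearMap.coe_mk, AddHom.coe_mk, one_mul]
    have hd0 : ∀ x, (0:ℝ) ≤ graphDeg b x := fun x => (hdeg_pos x).le
    have hn := norm_sq_eq hd0 ((memL2_mul hdeg_pos hg f).toLp _)
    rw [coeFn_toLp hdeg_pos] at hn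
    refine le_of_sq_le_sq (norm_nonneg _) (norm_nonneg _) ?_
    rw [hn, norm_sq_eq hd0 f]
    refine Summable.tsum_le_tsum (fun z => ?_)
      ((memL2_iff hd0 _).1 (memL2_mul hdeg_pos hg f)) (summable_fsq hdeg_pos f)
    have : (g z * (f : X → ℝ) z) ^ 2 ≤ ((f : X → ℝ) z) ^ 2 := by
      rw [mul_pow]
      refine mul_le_of_le_one_left (sq_nonneg _) ?_
      rw [← sq_abs]
      exact pow_le_one₀ (abs_nonneg _) (hg z)
    exact mul_le_mul_of_nonneg_left this (hd0 z)

lemma mulOp_apply (hdeg_pos : ∀ x, 0 < graphDeg b x) {g : X → ℝ} (hg : ∀ z, |g z| ≤ 1) (f : Lp ℝ 2 (graphMeasure (graphDeg b))) :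
    ((mulOp hdeg_pos hg f : Lp ℝ 2 (graphMeasure (graphDeg b))) : X → ℝ)
      = fun z => g z * (f : X → ℝ) z := by
  rw [mulOp]
  exact coeFn_toLp hdeg_pos (memL2_mul hdeg_pos hg f)


lemma inner_kernelOp_le (hb_nonneg : ∀ x y, 0 ≤ b x y) (hb_symm : ∀ x y, b x y = b y x)
    (hlf : ∀ x, (Function.support (b x)).Finite) (hdeg_pos : ∀ x, 0 < graphDeg b x)
    {C D : ℝ} (hC : 0 ≤ C) (hD : 0 ≤ D) {c : X → X → ℝ}
    (hc : ∀ z w, |c z w| ≤ C * b z w) (hc0 : ∀ z w, 0 ≤ c z w + c w z)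
    (hcD : ∀ z w, c z w + c w z ≤ 2 * D * b z w)
    (f : Lp ℝ 2 (graphMeasure (graphDeg b))) :
    (inner ℝ (kernelOp hb_nonneg hb_symm hlf hdeg_pos hC hc f) f : ℝ) ≤ D * ‖f‖ ^ 2 := by
  set F : X → ℝ := ((f : Lp ℝ 2 (graphMeasure (graphDeg b))) : X → ℝ) with hF
  have hm0 : ∀ z, (0:ℝ) ≤ graphDeg b z := fun z => (hdeg_pos z).le
  have hfsq : Summable fun z => graphDeg b z * F z ^ 2 := summable_fsq hdeg_pos f
  have hczero : ∀ z w, w ∉ (hlf z).toFinset → c z w = 0 := by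
    intro z w hw
    have h1 := hc z w
    rw [not_mem_sup hlf hw, mul_zero] at h1
    exact abs_eq_zero.1 (le_antisymm h1 (abs_nonneg _))
  -- the inner ℝ product as a double sum
  have hI : (inner ℝ (kernelOp hb_nonneg hb_symm hlf hdeg_pos hC hc f) f : ℝ)
      = ∑' z, F z * ∑ w ∈ (hlf z).toFinset, c z w * F w := by
    rw [inner_eq hm0, kernelOp_apply hb_nonneg hb_symm hlf hdeg_pos hC hc f]
    refine tsum_congr fun z => ?_
    rw [Tfun]
    have hz := (hdeg_pos z).ne'
    field_simp
    ring
  -- summability over the product space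
  have hnn1 : ∀ p : X × X, 0 ≤ b p.1 p.2 * F p.1 ^ 2 := fun p =>
    mul_nonneg (hb_nonneg _ _) (sq_nonneg _)
  have S1 : Summable fun p : X × X => b p.1 p.2 * F p.1 ^ 2 := by
    rw [summable_prod_of_nonneg hnn1]
    constructor
    · intro z
      exact summable_of_ne_finset_zero (s := (hlf z).toFinset)
        (fun w hw => by rw [not_mem_sup hlf hw, zero_mul])
    · refine hfsq.congr fun z => ?_
      show graphDeg b z * F z ^ 2 = ∑' y, b z y * F z ^ 2
      rw [tsum_mul_right]
      congr 1
  have S2 : Summable fun p : X × X => b p.1 p.2 * F p.2 ^ 2 := by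
    refine S1.prod_symm.congr fun p => ?_
    simp only [Prod.fst_swap, Prod.snd_swap]
    rw [hb_symm]
  have Shalf : Summable fun p : X × X =>
      (1/2) * (b p.1 p.2 * F p.1 ^ 2 + b p.1 p.2 * F p.2 ^ 2) := ((S1.add S2).mul_left _)
  have hGb_le : ∀ p : X × X, b p.1 p.2 * (|F p.1| * |F p.2|) ≤
      (1/2) * (b p.1 p.2 * F p.1 ^ 2 + b p.1 p.2 * F p.2 ^ 2) := by
    intro p
    have h1 := hb_nonneg p.1 p.2
    nlinarith [sq_nonneg (|F p.1| - |F p.2|), sq_abs (F p.1), sq_abs (F p.2),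
      mul_le_mul_of_nonneg_left (sq_nonneg (|F p.1| - |F p.2|)) h1]
  have Sb : Summable fun p : X × X => b p.1 p.2 * (|F p.1| * |F p.2|) :=
    Summable.of_nonneg_of_le
      (fun p => mul_nonneg (hb_nonneg _ _) (mul_nonneg (abs_nonneg _) (abs_nonneg _)))
      hGb_le Shalf
  have habsG : ∀ p : X × X, |c p.1 p.2 * (F p.1 * F p.2)| ≤
      C * (b p.1 p.2 * (|F p.1| * |F p.2|)) := by
    intro p
    rw [abs_mul, abs_mul]
    calc |c p.1 p.2| * (|F p.1| * |F p.2|)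
        ≤ (C * b p.1 p.2) * (|F p.1| * |F p.2|) :=
          mul_le_mul_of_nonneg_right (hc _ _) (mul_nonneg (abs_nonneg _) (abs_nonneg _))
      _ = C * (b p.1 p.2 * (|F p.1| * |F p.2|)) := by ring
  have SG : Summable fun p : X × X => c p.1 p.2 * (F p.1 * F p.2) := by
    refine Summable.of_abs (Summable.of_nonneg_of_le (fun p => abs_nonneg _) habsG
      (Sb.mul_left C))
  have SGs : Summable fun p : X × X => c p.2 p.1 * (F p.1 * F p.2) := by
    refine SG.prod_symm.congr fun p => ?_
    simp only [Prod.fst_swap, Prod.snd_swap]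
    ring
  -- T : the double sum
  set T := ∑' p : X × X, c p.1 p.2 * (F p.1 * F p.2) with hTdef
  have hT : (∑' z, F z * ∑ w ∈ (hlf z).toFinset, c z w * F w) = T := by
    rw [hTdef, Summable.tsum_prod' SG (fun z => summable_of_ne_finset_zero (s := (hlf z).toFinset)
      (fun w hw => by rw [hczero z w hw, zero_mul]))]
    refine tsum_congr fun z => ?_
    rw [tsum_eq_sum (s := (hlf z).toFinset)
      (fun w hw => by rw [hczero z w hw, zero_mul]), Finset.mul_sum]
    exact Finset.sum_congr rfl fun w _ => by ring
  -- swap symmetry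
  have hswap : (∑' p : X × X, c p.2 p.1 * (F p.1 * F p.2)) = T := by
    rw [hTdef, ← (Equiv.prodComm X X).tsum_eq (fun p : X × X => c p.1 p.2 * (F p.1 * F p.2))]
    exact tsum_congr fun p => by simp only [Equiv.prodComm_apply, Prod.fst_swap, Prod.snd_swap]; ring
  have h2T : T + T = ∑' p : X × X, (c p.1 p.2 + c p.2 p.1) * (F p.1 * F p.2) := by
    nth_rewrite 2 [← hswap]
    rw [hTdef, ← Summable.tsum_add SG SGs]
    exact tsum_congr fun p => by ring
  -- pointwise bound for the symmetrized sum
  have hpt : ∀ p : X × X, (c p.1 p.2 + c p.2 p.1) * (F p.1 * F p.2) ≤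
      2 * D * (b p.1 p.2 * (|F p.1| * |F p.2|)) := by
    intro p
    calc (c p.1 p.2 + c p.2 p.1) * (F p.1 * F p.2)
        ≤ (c p.1 p.2 + c p.2 p.1) * |F p.1 * F p.2| :=
          mul_le_mul_of_nonneg_left (le_abs_self _) (hc0 _ _)
      _ ≤ (2 * D * b p.1 p.2) * |F p.1 * F p.2| :=
          mul_le_mul_of_nonneg_right (hcD _ _) (abs_nonneg _)
      _ = 2 * D * (b p.1 p.2 * (|F p.1| * |F p.2|)) := by rw [abs_mul]; ring
  have hsum2T : T + T ≤ 2 * D * ∑' p : X × X, b p.1 p.2 * (|F p.1| * |F p.2|) := by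
    rw [h2T, ← Summable.tsum_mul_left _ Sb]
    exact Summable.tsum_le_tsum hpt (by rw [h2T] at *; exact (SG.add SGs).congr fun p => by ring)
      (Sb.mul_left _)
  -- evaluate the dominating sums
  have hGsq1 : (∑' p : X × X, b p.1 p.2 * F p.1 ^ 2) = ‖f‖ ^ 2 := by
    rw [Summable.tsum_prod' S1 (fun z => summable_of_ne_finset_zero (s := (hlf z).toFinset)
      (fun w hw => by rw [not_mem_sup hlf hw, zero_mul]))]
    rw [norm_sq_eq hm0 f]
    refine tsum_congr fun z => ?_
    show (∑' y, b z y * F z ^ 2) = graphDeg b z * F z ^ 2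
    rw [tsum_mul_right]
    congr 1
  have hGsq2 : (∑' p : X × X, b p.1 p.2 * F p.2 ^ 2) = ‖f‖ ^ 2 := by
    rw [← hGsq1, ← (Equiv.prodComm X X).tsum_eq (fun p : X × X => b p.1 p.2 * F p.2 ^ 2)]
    exact tsum_congr fun p => by
      simp only [Equiv.prodComm_apply, Prod.fst_swap, Prod.snd_swap]
      rw [hb_symm]
  have hGb : (∑' p : X × X, b p.1 p.2 * (|F p.1| * |F p.2|)) ≤ ‖f‖ ^ 2 := by
    have h5 := Summable.tsum_le_tsum hGb_le Sb Shalf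
    rw [Summable.tsum_mul_left _ (S1.add S2), Summable.tsum_add S1 S2, hGsq1, hGsq2] at h5
    linarith
  -- conclude
  rw [hI, hT]
  have h6 : T + T ≤ 2 * D * ‖f‖ ^ 2 := by
    refine hsum2T.trans ?_
    have := mul_le_mul_of_nonneg_left hGb (by linarith : (0:ℝ) ≤ 2 * D)
    linarith
  linarith

end Ops

end Graph

section Abstract
set_option synthInstance.maxHeartbeats 1000000

/-- Intertwining passes to exponentials. -/
lemma exp_semiconj {A : Type*} [NormedRing A] [NormedAlgebra ℝ A] [CompleteSpace A]
    {n a c : A} (h : SemiconjBy n a c) :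
    n * NormedSpace.exp a = NormedSpace.exp c * n := by
  have e1 : NormedSpace.exp a = ∑' k : ℕ, (k.factorial : ℝ)⁻¹ • a ^ k := by
    rw [NormedSpace.exp_eq_tsum ℝ]
  have e2 : NormedSpace.exp c = ∑' k : ℕ, (k.factorial : ℝ)⁻¹ • c ^ k := by
    rw [NormedSpace.exp_eq_tsum ℝ]
  rw [e1, e2, ← (NormedSpace.expSeries_summable' (𝕂 := ℝ) a).tsum_mul_left n,
    ← (NormedSpace.expSeries_summable' (𝕂 := ℝ) c).tsum_mul_right n]
  refine tsum_congr fun k => ?_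
  rw [mul_smul_comm, smul_mul_assoc, (h.pow_right k).eq]

/-- Semigroup bound from a numerical-range bound, via Gronwall. -/
lemma semigroup_norm_bound {E : Type*} [NormedAddCommGroup E] [InnerProductSpace ℝ E]
    [CompleteSpace E] (Cop : E →L[ℝ] E) (ω : ℝ)
    (hC : ∀ u : E, (inner ℝ (Cop u) u : ℝ) ≤ ω * ‖u‖ ^ 2) (v : E) {t : ℝ} (ht : 0 ≤ t) :
    ‖NormedSpace.exp (t • Cop) v‖ ≤ Real.exp (ω * t) * ‖v‖ := by
  set u : ℝ → E := fun s => NormedSpace.exp (s • Cop) v with hu_def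
  have hu : ∀ s : ℝ, HasDerivAt u (Cop (u s)) s := by
    intro s
    have h1 := hasDerivAt_exp_smul_const (𝕂 := ℝ) Cop s
    have h2 := h1.clm_apply (hasDerivAt_const s v)
    simp only [map_zero, add_zero] at h2
    have h3 : (NormedSpace.exp (s • Cop) * Cop) v = Cop (u s) := by
      have hcomm : Commute (s • Cop) Cop := (Commute.refl Cop).smul_left s
      rw [hcomm.exp_left.eq, ContinuousLinearMap.mul_apply]
    rw [h3] at h2
    exact h2
  set ψ : ℝ → ℝ := fun s => (inner ℝ (u s) (u s) : ℝ) * Real.exp (-(2 * ω) * s) with hψ_def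
  have hψ : ∀ s : ℝ, HasDerivAt ψ
      (((inner ℝ (u s) (Cop (u s)) : ℝ) + (inner ℝ (Cop (u s)) (u s) : ℝ)) * Real.exp (-(2 * ω) * s)
        + (inner ℝ (u s) (u s) : ℝ) * (Real.exp (-(2 * ω) * s) * (-(2 * ω)))) s := by
    intro s
    have hinner := (hu s).inner ℝ (hu s)
    have hexp : HasDerivAt (fun s : ℝ => Real.exp (-(2 * ω) * s))
        (Real.exp (-(2 * ω) * s) * (-(2 * ω))) s := by
      have hlin : HasDerivAt (fun s : ℝ => -(2 * ω) * s) (-(2 * ω)) s := by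
        simpa using (hasDerivAt_id s).const_mul (-(2 * ω))
      exact hlin.exp
    exact hinner.mul hexp
  have hderiv_le : ∀ s : ℝ, 0 ≤ s → deriv ψ s ≤ 0 := by
    intro s _
    rw [(hψ s).deriv]
    have h1 : (inner ℝ (u s) (Cop (u s)) : ℝ) = (inner ℝ (Cop (u s)) (u s) : ℝ) := real_inner_comm _ _
    have h2 : (inner ℝ (Cop (u s)) (u s) : ℝ) ≤ ω * ‖u s‖ ^ 2 := hC (u s)
    have h3 : (inner ℝ (u s) (u s) : ℝ) = ‖u s‖ ^ 2 := real_inner_self_eq_norm_sq _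
    have hepos : (0:ℝ) < Real.exp (-(2 * ω) * s) := Real.exp_pos _
    rw [h1, h3]
    nlinarith [sq_nonneg ‖u s‖]
  have hanti : AntitoneOn ψ (Set.Ici (0:ℝ)) := by
    refine antitoneOn_of_deriv_nonpos (convex_Ici 0) ?_ ?_ ?_
    · exact fun s _ => ((hψ s).continuousAt).continuousWithinAt
    · exact fun s hs => ((hψ s).differentiableAt).differentiableWithinAt
    · intro s hs
      exact hderiv_le s (le_of_lt (by simpa using hs))
  have hψt : ψ t ≤ ψ 0 := hanti (Set.self_mem_Ici) ht ht
  have hψ0 : ψ 0 = ‖v‖ ^ 2 := by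
    simp only [hψ_def, hu_def, zero_smul, NormedSpace.exp_zero, ContinuousLinearMap.one_apply,
      mul_zero, Real.exp_zero, mul_one, real_inner_self_eq_norm_sq]
  have hut : (inner ℝ (u t) (u t) : ℝ) = ‖u t‖ ^ 2 := real_inner_self_eq_norm_sq _
  have key : ‖u t‖ ^ 2 ≤ Real.exp (2 * ω * t) * ‖v‖ ^ 2 := by
    have h4 : ψ t = ‖u t‖ ^ 2 * Real.exp (-(2 * ω) * t) := by rw [hψ_def]; simp [hut]
    have h5 := hψt.trans_eq hψ0
    rw [h4] at h5
    have hepos : (0:ℝ) < Real.exp (-(2 * ω) * t) := Real.exp_pos _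
    have := mul_le_mul_of_nonneg_right h5 (Real.exp_pos (2 * ω * t)).le
    have hz : Real.exp (-(2 * ω) * t) * Real.exp (2 * ω * t) = 1 := by
      rw [← Real.exp_add]; ring_nf; exact Real.exp_zero
    calc ‖u t‖ ^ 2 = ‖u t‖ ^ 2 * (Real.exp (-(2 * ω) * t) * Real.exp (2 * ω * t)) := by
          rw [hz, mul_one]
        _ = ‖u t‖ ^ 2 * Real.exp (-(2 * ω) * t) * Real.exp (2 * ω * t) := by ring
        _ ≤ ‖v‖ ^ 2 * Real.exp (2 * ω * t) := this
        _ = Real.exp (2 * ω * t) * ‖v‖ ^ 2 := by ring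
  refine le_of_sq_le_sq (norm_nonneg _) (mul_nonneg (Real.exp_pos _).le (norm_nonneg _)) ?_
  have hsplit : Real.exp (2 * ω * t) = Real.exp (ω * t) * Real.exp (ω * t) := by
    rw [← Real.exp_add]; ring_nf
  calc ‖u t‖ ^ 2 ≤ Real.exp (2 * ω * t) * ‖v‖ ^ 2 := key
    _ = (Real.exp (ω * t) * ‖v‖) ^ 2 := by rw [hsplit]; ring

end Abstract

section Dist
variable {b : X → X → ℝ}

lemma combDist_self (x : X) : combDist b x x = 0 := by
  have h : 0 ∈ {n : ℕ | ∃ f : ℕ → X, f 0 = x ∧ f n = x ∧ ∀ i < n, 0 < b (f i) (f (i + 1))} :=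
    ⟨fun _ => x, rfl, rfl, fun i h => absurd h (Nat.not_lt_zero i)⟩
  exact Nat.sInf_eq_zero.2 (Or.inl h)

lemma combDist_set_nonempty {x y : X}
    (hconn : Relation.ReflTransGen (fun u v => 0 < b u v) x y) :
    {n : ℕ | ∃ f : ℕ → X, f 0 = x ∧ f n = y ∧ ∀ i < n, 0 < b (f i) (f (i + 1))}.Nonempty := by
  induction hconn with
  | refl => exact ⟨0, fun _ => x, rfl, rfl, fun i h => absurd h (Nat.not_lt_zero i)⟩
  | @tail v w hab hbc ih =>
    obtain ⟨n, f, h0, hn, he⟩ := ih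
    refine ⟨n + 1, fun i => if i < n + 1 then f i else w, ?_, ?_, ?_⟩
    · simp [h0]
    · simp
    · intro i hi
      rcases Nat.lt_or_ge i n with h | h
      · have h1 : i < n + 1 := by omega
        have h2 : i + 1 < n + 1 := by omega
        simpa [h1, h2] using he i h
      · have h1 : i = n := by omega
        subst h1
        have h2 : i < i + 1 := by omega
        have h3 : ¬ (i + 1 < i + 1) := by omega
        simpa [h2, h3, hn] using hbc

lemma combDist_le_succ {z w y : X} (hzw : 0 < b z w)
    (hconn : Relation.ReflTransGen (fun u v => 0 < b u v) w y) :
    combDist b z y ≤ combDist b w y + 1 := by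
  obtain ⟨f, h0, hn, he⟩ := Nat.sInf_mem (combDist_set_nonempty hconn)
  have hcd : sInf {n | ∃ f : ℕ → X, f 0 = w ∧ f n = y ∧ ∀ i < n, 0 < b (f i) (f (i + 1))}
      = combDist b w y := rfl
  set n := sInf {n | ∃ f : ℕ → X, f 0 = w ∧ f n = y ∧ ∀ i < n, 0 < b (f i) (f (i + 1))} with hnd
  rw [← hcd]
  refine Nat.sInf_le ?_
  refine ⟨fun i => if i = 0 then z else f (i - 1), by simp, by simp [hn], ?_⟩
  intro i hi
  rcases Nat.eq_zero_or_pos i with h | h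
  · subst h
    simpa [h0] using hzw
  · have h1 : i ≠ 0 := Nat.pos_iff_ne_zero.mp h
    have h2 : i + 1 ≠ 0 := Nat.succ_ne_zero i
    have h4 : i - 1 + 1 = i := Nat.succ_pred_eq_of_pos h
    have h3 : i - 1 < n := Nat.lt_of_succ_le (by
      rw [Nat.succ_eq_add_one, h4]; exact Nat.lt_succ_iff.mp hi)
    simpa [h1, h2, h4] using he (i - 1) h3

lemma combDist_lip (hb_symm : ∀ x y, b x y = b y x)
    (hconn : ∀ u v : X, Relation.ReflTransGen (fun u v => 0 < b u v) u v)
    {z w : X} (y : X) (hzw : 0 < b z w) :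
    |((combDist b z y : ℝ)) - (combDist b w y : ℝ)| ≤ 1 := by
  have h1 := combDist_le_succ hzw (hconn w y)
  have h2 := combDist_le_succ (by rw [hb_symm]; exact hzw) (hconn z y)
  have h1' : (combDist b z y : ℝ) ≤ (combDist b w y : ℝ) + 1 := by exact_mod_cast h1
  have h2' : (combDist b w y : ℝ) ≤ (combDist b z y : ℝ) + 1 := by exact_mod_cast h2
  rw [abs_sub_le_iff]
  constructor <;> linarith

end Dist

end Davies

open Davies

theorem stmt5 {X : Type*} [Countable X] [MeasurableSpace X] [MeasurableSingletonClass X]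
    (b : X → X → ℝ)
    (hb_nonneg : ∀ x y, 0 ≤ b x y) (hb_symm : ∀ x y, b x y = b y x)
    (hb_loop : ∀ x, b x x = 0)
    (hlf : ∀ x, (Function.support (b x)).Finite)
    (hdeg_pos : ∀ x, 0 < graphDeg b x)
    (hconn : ∀ x y, Relation.ReflTransGen (fun u v => 0 < b u v) x y)
    -- the Laplacian, a bounded self-adjoint operator on `ℓ²(X, deg)`
    (Δ : Lp ℝ 2 (graphMeasure (graphDeg b)) →L[ℝ] Lp ℝ 2 (graphMeasure (graphDeg b)))
    (hΔ : ∀ u : Lp ℝ 2 (graphMeasure (graphDeg b)), ∀ x : X,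
      (Δ u : X → ℝ) x = (graphDeg b x)⁻¹ * ∑' y, b x y * ((u : X → ℝ) x - (u : X → ℝ) y))
    (hΔ_sa : IsSelfAdjoint Δ)
    -- the heat kernel `p_t(x,y) = ⟨δ_x, e^{−tΔ} δ_y⟩ / (deg(x)·deg(y))`
    (p : ℝ → X → X → ℝ)
    (hp : ∀ t x y, p t x y =
      (inner ℝ (deltaVert (graphDeg b) x)
        (NormedSpace.exp (-(t • Δ)) (deltaVert (graphDeg b) y)) : ℝ) /
        (graphDeg b x * graphDeg b y)) :
    ∀ (x y : X) (t : ℝ), 0 < t →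
      p t x y ≤ (Real.sqrt (graphDeg b x * graphDeg b y))⁻¹ *
        Real.exp (-(t * zeta ((combDist b x y : ℝ) / t))) := by
  intro x y t ht
  have hm0 : ∀ z, (0:ℝ) ≤ graphDeg b z := fun z => (hdeg_pos z).le
  set d : ℝ := (combDist b x y : ℝ) with hd_def
  have hd0 : 0 ≤ d := Nat.cast_nonneg _
  set α := Real.arsinh (d / t) with hα_def
  have hα0 : 0 ≤ α := by
    rw [hα_def, ← Real.arsinh_zero]
    exact Real.arsinh_le_arsinh.2 (div_nonneg hd0 ht.le)
  set ρ : X → ℝ := fun z => (combDist b z y : ℝ) with hρ_def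
  have hρ0 : ∀ z, 0 ≤ ρ z := fun z => Nat.cast_nonneg _
  have hρy : ρ y = 0 := by rw [hρ_def]; simp [combDist_self]
  set g : X → ℝ := fun z => Real.exp (-(α * ρ z)) with hg_def
  have hgeq : ∀ z, g z = Real.exp (-(α * ρ z)) := fun _ => rfl
  have hg1 : ∀ z, |g z| ≤ 1 := by
    intro z
    rw [hgeq, abs_of_pos (Real.exp_pos _), Real.exp_le_one_iff]
    have := mul_nonneg hα0 (hρ0 z)
    linarith
  -- the three operators
  have hc0 : ∀ z w, |b z w| ≤ 1 * b z w := fun z w => by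
    rw [abs_of_nonneg (hb_nonneg z w), one_mul]
  set A0 := kernelOp hb_nonneg hb_symm hlf hdeg_pos zero_le_one hc0 with hA0_def
  set cα : X → X → ℝ := fun z w => b z w * Real.exp (α * (ρ z - ρ w)) with hcα_def
  have hcαeq : ∀ z w, cα z w = b z w * Real.exp (α * (ρ z - ρ w)) := fun _ _ => rfl
  have hρlip : ∀ z w, 0 < b z w → |ρ z - ρ w| ≤ 1 := fun z w h =>
    combDist_lip hb_symm hconn y h
  have hexple : ∀ z w, 0 < b z w → Real.exp (α * (ρ z - ρ w)) ≤ Real.exp α := by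
    intro z w h
    rw [Real.exp_le_exp]
    calc α * (ρ z - ρ w) ≤ |α * (ρ z - ρ w)| := le_abs_self _
      _ = α * |ρ z - ρ w| := by rw [abs_mul, abs_of_nonneg hα0]
      _ ≤ α * 1 := mul_le_mul_of_nonneg_left (hρlip z w h) hα0
      _ = α := mul_one α
  have hcα : ∀ z w, |cα z w| ≤ Real.exp α * b z w := by
    intro z w
    rcases eq_or_lt_of_le (hb_nonneg z w) with h | h
    · rw [hcαeq]
      simp [← h]
    · rw [hcαeq, abs_of_nonneg (mul_nonneg h.le (Real.exp_pos _).le)]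
      calc b z w * Real.exp (α * (ρ z - ρ w)) ≤ b z w * Real.exp α :=
            mul_le_mul_of_nonneg_left (hexple z w h) h.le
        _ = Real.exp α * b z w := mul_comm _ _
  have hcα0 : ∀ z w, 0 ≤ cα z w + cα w z := by
    intro z w
    rw [hcαeq, hcαeq]
    have h1 : (0:ℝ) ≤ b z w * Real.exp (α * (ρ z - ρ w)) :=
      mul_nonneg (hb_nonneg z w) (Real.exp_pos _).le
    have h2 : (0:ℝ) ≤ b w z * Real.exp (α * (ρ w - ρ z)) :=
      mul_nonneg (hb_nonneg w z) (Real.exp_pos _).le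
    linarith
  have hcαD : ∀ z w, cα z w + cα w z ≤ 2 * Real.cosh α * b z w := by
    intro z w
    rcases eq_or_lt_of_le (hb_nonneg z w) with h | h
    · rw [hcαeq, hcαeq]
      have hwz : b w z = 0 := by rw [hb_symm]; exact h.symm
      rw [← h, hwz]
      simp
    · rw [hcαeq, hcαeq]
      have hwz : b w z = b z w := hb_symm w z
      have hck : Real.exp (α * (ρ z - ρ w)) + Real.exp (α * (ρ w - ρ z))
          = 2 * Real.cosh (α * (ρ z - ρ w)) := by
        rw [Real.cosh_eq]
        have hneg : α * (ρ w - ρ z) = -(α * (ρ z - ρ w)) := by ring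
        rw [hneg]
        ring
      have hcosh : Real.cosh (α * (ρ z - ρ w)) ≤ Real.cosh α := by
        rw [Real.cosh_le_cosh, abs_mul, abs_of_nonneg hα0]
        calc α * |ρ z - ρ w| ≤ α * 1 := mul_le_mul_of_nonneg_left (hρlip z w h) hα0
          _ = α := mul_one α
      calc b z w * Real.exp (α * (ρ z - ρ w)) + b w z * Real.exp (α * (ρ w - ρ z))
          = b z w * (2 * Real.cosh (α * (ρ z - ρ w))) := by rw [hwz, ← hck]; ring
        _ ≤ b z w * (2 * Real.cosh α) := by
            refine mul_le_mul_of_nonneg_left ?_ h.le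
            linarith
        _ = 2 * Real.cosh α * b z w := by ring
  set Aα := kernelOp hb_nonneg hb_symm hlf hdeg_pos (Real.exp_pos α).le hcα with hAα_def
  set N := mulOp hdeg_pos hg1 with hN_def
  -- Δ = 1 - A0
  have hΔeq : Δ = 1 - A0 := by
    refine ContinuousLinearMap.ext fun u => ?_
    refine Lp_ext hdeg_pos fun z => ?_
    have h1 : (((1 - A0) u : Lp ℝ 2 (graphMeasure (graphDeg b))) : X → ℝ) z
        = (u : X → ℝ) z - ((A0 u : Lp ℝ 2 (graphMeasure (graphDeg b))) : X → ℝ) z := by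
      have h2 : ((1 - A0) u) = u - A0 u := by
        rw [ContinuousLinearMap.sub_apply, ContinuousLinearMap.one_apply]
      rw [h2, ae_eq_eq hdeg_pos (Lp.coeFn_sub u (A0 u))]
      rfl
    rw [hΔ u z, h1, hA0_def, kernelOp_apply, Tfun]
    rw [tsum_eq_sum (s := (hlf z).toFinset)
      (fun w hw => by rw [not_mem_sup hlf hw, zero_mul])]
    have h3 : ∑ w ∈ (hlf z).toFinset, b z w * ((u : X → ℝ) z - (u : X → ℝ) w)
        = graphDeg b z * (u : X → ℝ) z - ∑ w ∈ (hlf z).toFinset, b z w * (u : X → ℝ) w := by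
      rw [deg_eq_sum hlf, Finset.sum_mul]
      rw [← Finset.sum_sub_distrib]
      exact Finset.sum_congr rfl fun w _ => by ring
    rw [h3]
    have hz := (hdeg_pos z).ne'
    field_simp
  -- intertwining N Aα = A0 N
  have hNAα : N * Aα = A0 * N := by
    refine ContinuousLinearMap.ext fun u => ?_
    refine Lp_ext hdeg_pos fun z => ?_
    rw [ContinuousLinearMap.mul_apply, ContinuousLinearMap.mul_apply]
    have hL : ((N (Aα u) : Lp ℝ 2 (graphMeasure (graphDeg b))) : X → ℝ) z
        = g z * ((graphDeg b z)⁻¹ * ∑ w ∈ (hlf z).toFinset, cα z w * (u : X → ℝ) w) := by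
      rw [hN_def, mulOp_apply]
      rw [hAα_def, kernelOp_apply]
      rfl
    have hR : ((A0 (N u) : Lp ℝ 2 (graphMeasure (graphDeg b))) : X → ℝ) z
        = (graphDeg b z)⁻¹ * ∑ w ∈ (hlf z).toFinset, b z w *
          (g w * (u : X → ℝ) w) := by
      rw [hA0_def, kernelOp_apply, Tfun]
      congr 1
      refine Finset.sum_congr rfl fun w _ => ?_
      rw [hN_def, mulOp_apply]
    rw [hL, hR, ← mul_assoc, mul_comm (g z), mul_assoc, Finset.mul_sum]
    congr 1
    refine Finset.sum_congr rfl fun w _ => ?_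
    have hgc : g z * cα z w = b z w * g w := by
      rw [hgeq, hcαeq]
      calc Real.exp (-(α * ρ z)) * (b z w * Real.exp (α * (ρ z - ρ w)))
          = b z w * (Real.exp (-(α * ρ z)) * Real.exp (α * (ρ z - ρ w))) := by ring
        _ = b z w * Real.exp (-(α * ρ z) + α * (ρ z - ρ w)) := by rw [Real.exp_add]
        _ = b z w * Real.exp (-(α * ρ w)) := by
            congr 1
            ring_nf
    calc g z * (cα z w * (u : X → ℝ) w) = (g z * cα z w) * (u : X → ℝ) w := by ring
      _ = b z w * (g w * (u : X → ℝ) w) := by rw [hgc]; ring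
  -- N fixes δ_y
  have hNδy : N (deltaVert (graphDeg b) y) = deltaVert (graphDeg b) y := by
    refine Lp_ext hdeg_pos fun z => ?_
    have h1 : ((N (deltaVert (graphDeg b) y) : Lp ℝ 2 (graphMeasure (graphDeg b))) : X → ℝ) z
        = g z * (deltaVert (graphDeg b) y : X → ℝ) z := by
      rw [hN_def, mulOp_apply]
    rw [h1]
    rcases eq_or_ne z y with h | h
    · subst h
      rw [delta_self hdeg_pos, mul_one, hgeq, hρy, mul_zero, neg_zero, Real.exp_zero]
    · rw [delta_ne hdeg_pos h, mul_zero]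
  -- intertwining of exponentials
  have hsemi : SemiconjBy N (t • (Aα - 1)) (t • (A0 - 1)) := by
    have h1 : N * (Aα - 1) = (A0 - 1) * N := by
      rw [mul_sub, sub_mul, hNAα, mul_one, one_mul]
    show N * (t • (Aα - 1)) = (t • (A0 - 1)) * N
    rw [mul_smul_comm, smul_mul_assoc, h1]
  have hexp := exp_semiconj hsemi
  have hEeq : -(t • Δ) = t • (A0 - 1) := by
    rw [hΔeq, ← smul_neg, neg_sub]
  set v := NormedSpace.exp (t • (Aα - 1)) (deltaVert (graphDeg b) y) with hv_def
  have hEδy : NormedSpace.exp (t • (A0 - 1)) (deltaVert (graphDeg b) y) = N v := by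
    conv_lhs => rw [← hNδy]
    rw [← ContinuousLinearMap.mul_apply, ← hexp, ContinuousLinearMap.mul_apply, hv_def]
  -- numerical-range bound and semigroup estimate
  have hω : ∀ u : Lp ℝ 2 (graphMeasure (graphDeg b)),
      (inner ℝ ((Aα - 1) u) u : ℝ) ≤ (Real.cosh α - 1) * ‖u‖ ^ 2 := by
    intro u
    have h1 : ((Aα - 1) u) = Aα u - u := by
      rw [ContinuousLinearMap.sub_apply, ContinuousLinearMap.one_apply]
    rw [h1, inner_sub_left]
    have h2 := inner_kernelOp_le hb_nonneg hb_symm hlf hdeg_pos (Real.exp_pos α).le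
      (by positivity : (0:ℝ) ≤ Real.cosh α) hcα hcα0 hcαD u
    have h3 : (inner ℝ u u : ℝ) = ‖u‖ ^ 2 := real_inner_self_eq_norm_sq u
    rw [← hAα_def] at h2
    rw [h3]
    linarith
  have hnorm : ‖v‖ ≤ Real.exp ((Real.cosh α - 1) * t) * ‖deltaVert (graphDeg b) y‖ := by
    rw [hv_def]
    exact semigroup_norm_bound (Aα - 1) _ hω _ ht.le
  -- the inner ℝ product bound
  have hinner : (inner ℝ (deltaVert (graphDeg b) x)
      (NormedSpace.exp (t • (A0 - 1)) (deltaVert (graphDeg b) y)) : ℝ)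
      ≤ Real.sqrt (graphDeg b x * graphDeg b y) *
        Real.exp (-(α * d) + (Real.cosh α - 1) * t) := by
    rw [hEδy]
    have h1 : (inner ℝ (deltaVert (graphDeg b) x) (N v) : ℝ)
        = g x * (inner ℝ (deltaVert (graphDeg b) x) v : ℝ) := by
      rw [inner_delta hdeg_pos, inner_delta hdeg_pos]
      have h2 : ((N v : Lp ℝ 2 (graphMeasure (graphDeg b))) : X → ℝ) x
          = g x * (v : X → ℝ) x := by rw [hN_def, mulOp_apply]
      rw [h2]
      ring
    rw [h1]
    have h3 : (inner ℝ (deltaVert (graphDeg b) x) v : ℝ) ≤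
        ‖deltaVert (graphDeg b) x‖ * ‖v‖ := real_inner_le_norm _ _
    have hgx : g x = Real.exp (-(α * d)) := hgeq x
    have hgx0 : 0 ≤ g x := by rw [hgeq]; exact (Real.exp_pos _).le
    calc g x * (inner ℝ (deltaVert (graphDeg b) x) v : ℝ)
        ≤ g x * (‖deltaVert (graphDeg b) x‖ * ‖v‖) := mul_le_mul_of_nonneg_left h3 hgx0
      _ ≤ g x * (‖deltaVert (graphDeg b) x‖ *
          (Real.exp ((Real.cosh α - 1) * t) * ‖deltaVert (graphDeg b) y‖)) := by
          refine mul_le_mul_of_nonneg_left ?_ hgx0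
          exact mul_le_mul_of_nonneg_left hnorm (norm_nonneg _)
      _ = Real.sqrt (graphDeg b x * graphDeg b y) *
          Real.exp (-(α * d) + (Real.cosh α - 1) * t) := by
          rw [norm_delta hdeg_pos, norm_delta hdeg_pos, hgx,
            Real.sqrt_mul (hm0 x), Real.exp_add]
          ring
  -- the exponent identity
  have hζ : -(α * d) + (Real.cosh α - 1) * t = -(t * zeta (d / t)) := by
    rw [hα_def, Real.cosh_arsinh, zeta]
    have h5 : Real.sqrt (1 + (d / t) ^ 2) = Real.sqrt ((d / t) ^ 2 + 1) := by rw [add_comm]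
    rw [h5]
    have ht' : t ≠ 0 := ht.ne'
    field_simp
    ring
  -- conclusion
  rw [hp, hEeq]
  have hmxy : (0:ℝ) < graphDeg b x * graphDeg b y := mul_pos (hdeg_pos x) (hdeg_pos y)
  rw [div_le_iff₀ hmxy]
  have hsq : Real.sqrt (graphDeg b x * graphDeg b y) * Real.sqrt (graphDeg b x * graphDeg b y)
      = graphDeg b x * graphDeg b y := Real.mul_self_sqrt hmxy.le
  have hsqpos : 0 < Real.sqrt (graphDeg b x * graphDeg b y) := Real.sqrt_pos.2 hmxy
  calc (inner ℝ (deltaVert (graphDeg b) x)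
      (NormedSpace.exp (t • (A0 - 1)) (deltaVert (graphDeg b) y)) : ℝ)
      ≤ Real.sqrt (graphDeg b x * graphDeg b y) *
        Real.exp (-(t * zeta (d / t))) := by rw [← hζ]; exact hinner
    _ = (Real.sqrt (graphDeg b x * graphDeg b y))⁻¹ *
        Real.exp (-(t * zeta (d / t))) * (graphDeg b x * graphDeg b y) := by
        nth_rewrite 3 [← hsq]
        have h9 : (Real.sqrt (graphDeg b x * graphDeg b y))⁻¹ *
            Real.exp (-(t * zeta (d / t))) *
            (Real.sqrt (graphDeg b x * graphDeg b y) * Real.sqrt (graphDeg b x * graphDeg b y))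
            = Real.sqrt (graphDeg b x * graphDeg b y) * Real.exp (-(t * zeta (d / t))) *
              ((Real.sqrt (graphDeg b x * graphDeg b y))⁻¹ *
                Real.sqrt (graphDeg b x * graphDeg b y)) := by ring
        rw [h9, inv_mul_cancel₀ hsqpos.ne', mul_one]


end
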